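/- Let G be a finite connected simple graph with exactly two vertices u ≠ v of degree 3 and every other vertex of degree 2. Then either (a) G is a theta graph: G is the union of three paths from u to v that are pairwise internally vertex-disjoint and pairwise edge-disjoint, and these paths contain all edges of G; or (b) G is a dumbbell graph: G is the union of two vertex-disjoint cycles, one passing through u and one passing through v, together with a path from u to v that meets the two cycles only in its endpoints u and v, and these contain all edges of G. -/

import Mathlib

namespace StmtTwoAux

open SimpleGraph Walk

variable {V : Type*} [Fintype V] [DecidableEq V] {G : SimpleGraph V} [DecidableRel G.Adj] {u v : V}

set_option linter.unusedSectionVars false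
lemma support_dropLast_append {s t : V} (w : G.Walk s t) :
    w.support.dropLast ++ [t] = w.support := by
  conv_rhs => rw [← List.dropLast_append_getLast (w.support_ne_nil)]
  rw [w.getLast_support]

lemma mem_dropLast_or_eq {s t x : V} (w : G.Walk s t) (hx : x ∈ w.support) :
    x ∈ w.support.dropLast ∨ x = t := by
  rw [← support_dropLast_append w, List.mem_append, List.mem_singleton] at hx
  exact hx

lemma end_not_mem_dropLast {s t : V} (w : G.Walk s t) (h : w.support.Nodup) :
    t ∉ w.support.dropLast := by
  intro ht
  rw [← support_dropLast_append w] at h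
  exact (List.disjoint_of_nodup_append h) ht (List.mem_singleton_self t)

lemma support_cons_dropLast {s b t : V} (h : G.Adj s b) (q : G.Walk b t) :
    (Walk.cons h q).support.dropLast = s :: q.support.dropLast := by
  rw [support_cons, List.dropLast_cons_of_ne_nil (support_ne_nil q)]

lemma start_mem_dropLast {s b t : V} (h : G.Adj s b) (q : G.Walk b t) :
    s ∈ (Walk.cons h q).support.dropLast := by
  rw [support_cons_dropLast]; exact List.mem_cons_self

lemma exists_edge_at {x : V} : ∀ {s t : V} (w : G.Walk s t), x ∈ w.support → 0 < w.length →
    ∃ y, s(x, y) ∈ w.edges := by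
  intro s t w
  induction w with
  | nil => simp
  | @cons s b t h q ih =>
    intro hx _
    rw [support_cons, List.mem_cons] at hx
    rcases hx with rfl | hx
    · exact ⟨b, by simp⟩
    · cases q with
      | nil =>
        simp only [support_nil, List.mem_singleton] at hx
        subst hx
        exact ⟨s, by rw [Sym2.eq_swap]; simp⟩
      | cons h' r =>
        obtain ⟨y, hy⟩ := ih hx (by simp)
        exact ⟨y, by rw [edges_cons]; exact List.mem_cons_of_mem _ hy⟩

lemma unique_edge_at {x : V} : ∀ {s t : V} (w : G.Walk s t), x ∉ w.support.dropLast →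
    ∀ y z, s(x, y) ∈ w.edges → s(x, z) ∈ w.edges → y = z := by
  intro s t w
  induction w with
  | nil => simp
  | @cons s b t h q ih =>
    intro hx y z hy hz
    rw [support_cons_dropLast] at hx
    have hxs : x ≠ s := fun hh => hx (hh ▸ List.mem_cons_self)
    have hxd : x ∉ q.support.dropLast := fun hh => hx (List.mem_cons_of_mem _ hh)
    cases q with
    | nil =>
      simp only [edges_cons, edges_nil, List.mem_singleton] at hy hz
      rcases Sym2.eq_iff.mp hy with ⟨h1, h2⟩ | ⟨h1, h2⟩
      · exact absurd h1 hxs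
      · rcases Sym2.eq_iff.mp hz with ⟨h1', h2'⟩ | ⟨h1', h2'⟩
        · exact absurd h1' hxs
        · rw [h2, h2']
    | cons h' r =>
      have hxb : x ≠ b := fun hh => hxd (hh ▸ start_mem_dropLast h' r)
      rw [edges_cons, List.mem_cons] at hy hz
      rcases hy with hy | hy
      · rcases Sym2.eq_iff.mp hy with ⟨h1, _⟩ | ⟨h1, _⟩
        · exact absurd h1 hxs
        · exact absurd h1 hxb
      · rcases hz with hz | hz
        · rcases Sym2.eq_iff.mp hz with ⟨h1, _⟩ | ⟨h1, _⟩
          · exact absurd h1 hxs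
          · exact absurd h1 hxb
        · exact ih hxd y z hy hz

lemma two_edges_at_internal {x : V} : ∀ {s t : V} (w : G.Walk s t), w.edges.Nodup →
    x ∈ w.support → x ≠ s → x ≠ t →
    ∃ y z, y ≠ z ∧ s(x, y) ∈ w.edges ∧ s(x, z) ∈ w.edges := by
  intro s t w
  induction w with
  | nil => intro _ hx hxs _; simp at hx; exact absurd hx hxs
  | @cons s b t h q ih =>
    intro hnd hx hxs hxt
    rw [support_cons, List.mem_cons] at hx
    rcases hx with rfl | hx
    · exact absurd rfl hxs
    · rw [edges_cons, List.nodup_cons] at hnd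
      by_cases hxb : x = b
      · subst hxb
        cases q with
        | nil => exact absurd rfl hxt
        | @cons _ c _ h' r =>
          refine ⟨s, c, ?_, ?_, ?_⟩
          · rintro rfl
            exact hnd.1 (by rw [Sym2.eq_swap]; simp)
          · rw [Sym2.eq_swap]; simp
          · simp
      · obtain ⟨y, z, hyz, hy, hz⟩ := ih hnd.2 hx hxb hxt
        exact ⟨y, z, hyz, List.mem_cons_of_mem _ hy, List.mem_cons_of_mem _ hz⟩


lemma deg_two_edge_mem (hdeg : ∀ w : V, w ≠ u → w ≠ v → G.degree w = 2)
    {s t x y : V} (w : G.Walk s t) (hnd : w.edges.Nodup)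
    (hx : x ∈ w.support) (hxs : x ≠ s) (hxt : x ≠ t) (hxu : x ≠ u) (hxv : x ≠ v)
    (hadj : G.Adj x y) : s(x, y) ∈ w.edges := by
  obtain ⟨y', z', hyz, hy', hz'⟩ := two_edges_at_internal w hnd hx hxs hxt
  by_contra hne
  have hyy' : y ≠ y' := by rintro rfl; exact hne hy'
  have hyz' : y ≠ z' := by rintro rfl; exact hne hz'
  have hsub : ({y, y', z'} : Finset V) ⊆ G.neighborFinset x := by
    intro w' hw'
    rw [mem_neighborFinset]
    simp only [Finset.mem_insert, Finset.mem_singleton] at hw'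
    rcases hw' with rfl | rfl | rfl
    · exact hadj
    · exact w.adj_of_mem_edges hy'
    · exact w.adj_of_mem_edges hz'
  have hcard : ({y, y', z'} : Finset V).card = 3 :=
    Finset.card_eq_three.mpr ⟨y, y', z', hyy', hyz', hyz, rfl⟩
  have := Finset.card_le_card hsub
  rw [hcard, card_neighborFinset_eq_degree, hdeg x hxu hxv] at this
  omega

lemma propagate {E : Set (Sym2 V)}
    (hE : ∀ x y, s(x, y) ∈ E → x ≠ u → x ≠ v → ∀ z, G.Adj x z → s(x, z) ∈ E) :
    ∀ {b t : V} (p : G.Walk b t), (∀ x ∈ p.support.dropLast, x ≠ u ∧ x ≠ v) →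
      (∃ e ∈ p.edges, e ∈ E) → ∀ e ∈ p.edges, e ∈ E := by
  intro b t p
  induction p with
  | nil => simp
  | @cons b c t h q ih =>
    intro hin he e hme
    cases q with
    | nil =>
      obtain ⟨e', he', hE'⟩ := he
      simp only [edges_cons, edges_nil, List.mem_singleton] at he' hme
      subst he'; subst hme; exact hE'
    | @cons c d t h' r =>
      have hc : c ≠ u ∧ c ≠ v :=
        hin c (by rw [support_cons_dropLast]; exact List.mem_cons_of_mem _ (start_mem_dropLast h' r))
      have hin' : ∀ x ∈ (Walk.cons h' r).support.dropLast, x ≠ u ∧ x ≠ v := fun x hxm =>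
        hin x (by rw [support_cons_dropLast h (Walk.cons h' r)]; exact List.mem_cons_of_mem _ hxm)
      have hfirst : s(c, d) ∈ (Walk.cons h' r).edges := by simp
      have main : s(b, c) ∈ E ∧ ∀ e'' ∈ (Walk.cons h' r).edges, e'' ∈ E := by
        obtain ⟨e', he', hEe'⟩ := he
        rw [edges_cons, List.mem_cons] at he'
        rcases he' with rfl | hq
        · have hqsub : ∀ e'' ∈ (Walk.cons h' r).edges, e'' ∈ E := by
            refine ih hin' ⟨s(c, d), hfirst, ?_⟩
            exact hE c b (by rwa [Sym2.eq_swap]) hc.1 hc.2 d h'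
          exact ⟨hEe', hqsub⟩
        · have hqsub := ih hin' ⟨e', hq, hEe'⟩
          have h0 : s(b, c) ∈ E := by
            rw [Sym2.eq_swap]
            exact hE c d (hqsub _ hfirst) hc.1 hc.2 b h.symm
          exact ⟨h0, hqsub⟩
      rw [edges_cons, List.mem_cons] at hme
      rcases hme with rfl | hme
      · exact main.1
      · exact main.2 _ hme

def SegP (u v s : V) {a t : V} (p : G.Walk a t) : Prop :=
  p.support.Nodup ∧ (∀ x ∈ p.support.dropLast, x ≠ u ∧ x ≠ v) ∧ s(s, a) ∉ p.edges

lemma SegP.cons_edges_nodup {s a t : V} {h : G.Adj s a} {p : G.Walk a t}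
    (hp : SegP u v s p) : (Walk.cons h p).edges.Nodup := by
  rw [edges_cons, List.nodup_cons]
  exact ⟨hp.2.2, (Walk.IsPath.mk' hp.1).isTrail.edges_nodup⟩

lemma SegP.start_not_uv {s a t : V} {p : G.Walk a t} (hp : SegP u v s p) (hat : a ≠ t) :
    a ≠ u ∧ a ≠ v := by
  cases p with
  | nil => exact absurd rfl hat
  | cons h' r => exact hp.2.1 a (start_mem_dropLast h' r)

lemma SegP.mem_uv_eq_end {s a t x : V} {p : G.Walk a t} (hp : SegP u v s p)
    (hx : x ∈ p.support) (hxuv : x = u ∨ x = v) : x = t := by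
  rcases mem_dropLast_or_eq p hx with hd | rfl
  · rcases hxuv with rfl | rfl
    · exact absurd rfl (hp.2.1 x hd).1
    · exact absurd rfl (hp.2.1 x hd).2
  · rfl

lemma seg_edges_subset (hdeg : ∀ w : V, w ≠ u → w ≠ v → G.degree w = 2)
    {s₁ a₁ t₁ s₂ a₂ t₂ : V}
    (hs₂ : s₂ = u ∨ s₂ = v) (ht₂ : t₂ = u ∨ t₂ = v)
    (h₁ : G.Adj s₁ a₁) (h₂ : G.Adj s₂ a₂)
    {p₁ : G.Walk a₁ t₁} {p₂ : G.Walk a₂ t₂}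
    (hp₁ : SegP u v s₁ p₁) (hp₂ : SegP u v s₂ p₂)
    {e : Sym2 V} (he₁ : e ∈ (Walk.cons h₁ p₁).edges) (he₂ : e ∈ (Walk.cons h₂ p₂).edges) :
    ∀ e' ∈ (Walk.cons h₁ p₁).edges, e' ∈ (Walk.cons h₂ p₂).edges := by
  have hw₂nd : (Walk.cons h₂ p₂).edges.Nodup := hp₂.cons_edges_nodup
  have hE : ∀ x y, s(x, y) ∈ {e : Sym2 V | e ∈ (Walk.cons h₂ p₂).edges} → x ≠ u → x ≠ v →
      ∀ z, G.Adj x z → s(x, z) ∈ {e : Sym2 V | e ∈ (Walk.cons h₂ p₂).edges} := by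
    intro x y hxy hxu hxv z hadj
    have hxsup : x ∈ (Walk.cons h₂ p₂).support := Walk.fst_mem_support_of_mem_edges _ hxy
    have hxs : x ≠ s₂ := by rcases hs₂ with rfl | rfl <;> [exact hxu; exact hxv]
    have hxt : x ≠ t₂ := by rcases ht₂ with rfl | rfl <;> [exact hxu; exact hxv]
    exact deg_two_edge_mem hdeg _ hw₂nd hxsup hxs hxt hxu hxv hadj
  cases p₁ with
  | nil =>
    simp only [edges_cons, edges_nil, List.mem_singleton] at he₁ ⊢
    intro e' he'
    rw [he']; rw [he₁] at he₂; exact he₂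
  | @cons a₁ c t₁ h1' r =>
    have ha₁ : a₁ ≠ u ∧ a₁ ≠ v := hp₁.2.1 a₁ (start_mem_dropLast h1' r)
    have hfirstq : s(a₁, c) ∈ (Walk.cons h1' r).edges := by simp
    have main : s(s₁, a₁) ∈ (Walk.cons h₂ p₂).edges ∧
        ∀ e'' ∈ (Walk.cons h1' r).edges, e'' ∈ (Walk.cons h₂ p₂).edges := by
      rw [edges_cons, List.mem_cons] at he₁
      rcases he₁ with rfl | hq
      · refine ⟨he₂, ?_⟩
        refine propagate hE _ hp₁.2.1 ⟨s(a₁, c), hfirstq, ?_⟩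
        exact hE a₁ s₁ (by rwa [Sym2.eq_swap]) ha₁.1 ha₁.2 c h1'
      · have hqsub := propagate hE _ hp₁.2.1 ⟨e, hq, he₂⟩
        refine ⟨?_, hqsub⟩
        rw [Sym2.eq_swap]
        exact hE a₁ c (hqsub _ hfirstq) ha₁.1 ha₁.2 s₁ h₁.symm
    intro e' he'
    rw [edges_cons, List.mem_cons] at he'
    rcases he' with rfl | hq'
    · exact main.1
    · exact main.2 _ hq'

lemma seg_same_anchor (hdeg : ∀ w : V, w ≠ u → w ≠ v → G.degree w = 2)
    {s a₁ t₁ a₂ t₂ : V}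
    (hs : s = u ∨ s = v) (ht₁ : t₁ = u ∨ t₁ = v)
    (h₁ : G.Adj s a₁) (h₂ : G.Adj s a₂) (hne : a₁ ≠ a₂)
    {p₁ : G.Walk a₁ t₁} {p₂ : G.Walk a₂ t₂} (hp₁ : SegP u v s p₁) (hp₂ : SegP u v s p₂)
    {e : Sym2 V} (he₁ : e ∈ (Walk.cons h₁ p₁).edges) (he₂ : e ∈ (Walk.cons h₂ p₂).edges) :
    t₁ = s ∧ s(s, a₂) ∈ p₁.edges := by
  have hsub := seg_edges_subset hdeg hs ht₁ h₂ h₁ hp₂ hp₁ he₂ he₁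
  have hmem : s(s, a₂) ∈ (Walk.cons h₁ p₁).edges := hsub _ (by simp)
  rw [edges_cons, List.mem_cons] at hmem
  rcases hmem with heq | hmem
  · rcases Sym2.eq_iff.mp heq with ⟨-, h2⟩ | ⟨h1, -⟩
    · exact absurd h2.symm hne
    · exact absurd h1.symm h₁.ne'
  · have hssup : s ∈ p₁.support := Walk.fst_mem_support_of_mem_edges _ hmem
    exact ⟨(hp₁.mem_uv_eq_end hssup hs).symm, hmem⟩

lemma cycle_seg_disjoint (hdeg : ∀ w : V, w ≠ u → w ≠ v → G.degree w = 2)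
    {s₁ a₁ s₂ a₂ t₂ : V}
    (hs₁ : s₁ = u ∨ s₁ = v) (hs₂ : s₂ = u ∨ s₂ = v) (hss : s₁ ≠ s₂)
    (h₁ : G.Adj s₁ a₁) (h₂ : G.Adj s₂ a₂)
    {p₁ : G.Walk a₁ s₁} {p₂ : G.Walk a₂ t₂} (hp₁ : SegP u v s₁ p₁) (hp₂ : SegP u v s₂ p₂)
    {e : Sym2 V} (he₁ : e ∈ (Walk.cons h₁ p₁).edges) (he₂ : e ∈ (Walk.cons h₂ p₂).edges) :
    False := by
  have hsub := seg_edges_subset hdeg hs₁ hs₁ h₂ h₁ hp₂ hp₁ he₂ he₁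
  have hmem : s(s₂, a₂) ∈ (Walk.cons h₁ p₁).edges := hsub _ (by simp)
  rw [edges_cons, List.mem_cons] at hmem
  rcases hmem with heq | hmem
  · rcases Sym2.eq_iff.mp heq with ⟨h1, -⟩ | ⟨h1, h2⟩
    · exact hss h1.symm
    · -- a₁ = s₂ : but a₁ avoids u,v since a₁ ≠ s₁ (cycle)
      have ha₁ : a₁ ≠ u ∧ a₁ ≠ v := hp₁.start_not_uv h₁.ne'
      rcases hs₂ with rfl | rfl
      · exact ha₁.1 h1.symm
      · exact ha₁.2 h1.symm
  · have hssup : s₂ ∈ p₁.support := Walk.fst_mem_support_of_mem_edges _ hmem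
    exact hss ((hp₁.mem_uv_eq_end hssup hs₂).symm)

lemma grow_aux (hdeg : ∀ w : V, w ≠ u → w ≠ v → G.degree w = 2)
    {s a : V} (hs : s = u ∨ s = v) (h : G.Adj s a) :
    ∀ (n : ℕ) (x pr : V) (p : G.Walk a x),
      Fintype.card V + 1 ≤ p.support.length + n →
      (Walk.cons h p).edges.Nodup →
      p.support.Nodup →
      (∀ y ∈ p.support, y ≠ u ∧ y ≠ v) →
      G.Adj pr x → s(pr, x) ∈ (Walk.cons h p).edges →
      ∃ (t : V) (q : G.Walk a t), (t = u ∨ t = v) ∧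
        (Walk.cons h q).edges.Nodup ∧ q.support.Nodup ∧
        (∀ y ∈ q.support.dropLast, y ≠ u ∧ y ≠ v) := by
  intro n
  induction n with
  | zero =>
    intro x pr p hcard _ hnd _ _ _
    have := hnd.length_le_card
    omega
  | succ n ih =>
    intro x pr p hcard hend hnd hav hpr hprm
    have hx : x ∈ p.support := p.end_mem_support
    have hxuv := hav x hx
    -- x has a neighbor other than pr
    have hdx : G.degree x = 2 := hdeg x hxuv.1 hxuv.2
    have hprn : pr ∈ G.neighborFinset x := by rw [mem_neighborFinset]; exact hpr.symm
    obtain ⟨nx, hnxmem, hnxne⟩ : ∃ nx ∈ G.neighborFinset x, nx ≠ pr := by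
      by_contra hcon
      push_neg at hcon
      have hsub : G.neighborFinset x ⊆ {pr} := fun z hz => by
        rw [Finset.mem_singleton]; exact hcon z hz
      have := Finset.card_le_card hsub
      rw [card_neighborFinset_eq_degree, hdx, Finset.card_singleton] at this
      omega
    rw [mem_neighborFinset] at hnxmem
    have hxnx : G.Adj x nx := hnxmem
    -- key fact: s(x, nx) ∉ (cons h p).edges  given nx ∉ support or nx = s cases below
    by_cases hnxuv : nx = u ∨ nx = v
    · -- finish
      refine ⟨nx, p.concat hxnx, hnxuv, ?_, ?_, ?_⟩
      · rw [← Walk.concat_cons, Walk.edges_concat, List.concat_eq_append, List.nodup_append]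
        refine ⟨hend, List.nodup_singleton _, ?_⟩
        intro e' he' _ he'' rfl
        rw [List.mem_singleton] at he''
        subst he''
        -- s(x, nx) ∈ (cons h p).edges → contradiction
        have hnxsup : nx ∈ (Walk.cons h p).support := Walk.snd_mem_support_of_mem_edges _ he'
        rw [support_cons, List.mem_cons] at hnxsup
        rcases hnxsup with rfl | hnxsup
        · -- nx = s
          rw [edges_cons, List.mem_cons] at he'
          rcases he' with heq | hmem
          · rcases Sym2.eq_iff.mp heq with ⟨h1, h2⟩ | ⟨h1, h2⟩
            · rcases hs with rfl | rfl
              · exact hxuv.1 h1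
              · exact hxuv.2 h1
            · -- x = a: then p is trivial and pr = s, contradicting nx ≠ pr
              have hpe : p.edges = [] := by
                cases p with
                | nil => rfl
                | cons h' r =>
                  exfalso
                  have hmm := r.end_mem_support
                  rw [support_cons, List.nodup_cons] at hnd
                  exact hnd.1 (h1 ▸ hmm)
              rw [edges_cons, hpe, List.mem_singleton] at hprm
              rcases Sym2.eq_iff.mp hprm with ⟨h1', h2'⟩ | ⟨h1', h2'⟩
              · exact hnxne h1'.symm
              · rcases hs with rfl | rfl
                · exact hxuv.1 h2'
                · exact hxuv.2 h2'
          · have : nx ∈ p.support := Walk.snd_mem_support_of_mem_edges _ hmem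
            rcases hnxuv with rfl | rfl
            · exact (hav _ this).1 rfl
            · exact (hav _ this).2 rfl
        · rcases hnxuv with rfl | rfl
          · exact (hav _ hnxsup).1 rfl
          · exact (hav _ hnxsup).2 rfl
      · rw [Walk.support_concat, List.nodup_append]
        refine ⟨hnd, List.nodup_singleton _, ?_⟩
        intro z hz _ hz' rfl
        rw [List.mem_singleton] at hz'
        subst hz'
        rcases hnxuv with rfl | rfl
        · exact (hav _ hz).1 rfl
        · exact (hav _ hz).2 rfl
      · rw [Walk.support_concat, List.dropLast_concat]
        exact fun y hy => hav y hy
    · -- nx not u,v : extend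
      push_neg at hnxuv
      have hnxs : nx ≠ s := by rcases hs with rfl | rfl; exact hnxuv.1; exact hnxuv.2
      have hnxsup : nx ∉ p.support := by
        intro hmem
        -- nx internal in cons h p : all its edges are in the walk
        have hnxx : nx ≠ x := fun hh => G.irrefl (hh ▸ hxnx)
        have hedge : s(nx, x) ∈ (Walk.cons h p).edges := by
          refine deg_two_edge_mem hdeg _ hend ?_ hnxs hnxx hnxuv.1 hnxuv.2 hxnx.symm
          rw [support_cons, List.mem_cons]; exact Or.inr hmem
        -- but x's edges at the end are unique: s(x, ·) forces nx = pr
        have hxd : x ∉ (Walk.cons h p).support.dropLast := by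
          rw [support_cons_dropLast]
          intro hmem'
          rcases List.mem_cons.mp hmem' with heq | hmem''
          · rcases hs with rfl | rfl
            · exact hxuv.1 heq
            · exact hxuv.2 heq
          · exact end_not_mem_dropLast p hnd hmem''
        have := unique_edge_at _ hxd nx pr (by rwa [Sym2.eq_swap]) (by rwa [Sym2.eq_swap])
        exact hnxne this
      have hnewedge : s(x, nx) ∉ (Walk.cons h p).edges := by
        intro hmem
        have : nx ∈ (Walk.cons h p).support := Walk.snd_mem_support_of_mem_edges _ hmem
        rw [support_cons, List.mem_cons] at this
        rcases this with rfl | hthis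
        · exact hnxs rfl
        · exact hnxsup hthis
      refine ih nx x (p.concat hxnx) ?_ ?_ ?_ ?_ hxnx ?_
      · rw [Walk.support_concat, List.length_append]
        simp only [List.length_singleton]
        omega
      · rw [← Walk.concat_cons, Walk.edges_concat, List.concat_eq_append, List.nodup_append]
        exact ⟨hend, List.nodup_singleton _, by
          intro e' he' _ he'' rfl
          rw [List.mem_singleton] at he''
          subst he''
          exact hnewedge he'⟩
      · rw [Walk.support_concat, List.nodup_append]
        exact ⟨hnd, List.nodup_singleton _, by
          intro z hz _ hz' rfl
          rw [List.mem_singleton] at hz'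
          subst hz'
          exact hnxsup hz⟩
      · intro y hy
        rw [Walk.support_concat, List.mem_append, List.mem_singleton] at hy
        rcases hy with hy | rfl
        · exact hav y hy
        · exact hnxuv
      · rw [← Walk.concat_cons, Walk.edges_concat, List.concat_eq_append, List.mem_append,
          List.mem_singleton]
        exact Or.inr rfl

lemma grow (hdeg : ∀ w : V, w ≠ u → w ≠ v → G.degree w = 2)
    {s a : V} (hs : s = u ∨ s = v) (h : G.Adj s a) :
    ∃ (t : V) (q : G.Walk a t), (t = u ∨ t = v) ∧
      (Walk.cons h q).edges.Nodup ∧ SegP u v s q := by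
  by_cases hauv : a = u ∨ a = v
  · refine ⟨a, Walk.nil, hauv, by simp, by simp [SegP]⟩
  · push_neg at hauv
    obtain ⟨t, q, ht, h1, h2, h3⟩ := grow_aux hdeg hs h (Fintype.card V) a s Walk.nil
      (by simp only [Walk.support_nil, List.length_singleton]; omega) (by simp)
      (by simp) (by simpa using hauv) h (by simp)
    refine ⟨t, q, ht, h1, h2, h3, ?_⟩
    rw [edges_cons, List.nodup_cons] at h1
    exact h1.1

set_option maxHeartbeats 1600000 in
lemma fork (hdeg : ∀ w : V, w ≠ u → w ≠ v → G.degree w = 2)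
    {s s' : V} (hs : s = u ∨ s = v) (hs' : s' = u ∨ s' = v) (hne : s ≠ s')
    (hdeg3 : G.degree s = 3) :
    (∃ (a₁ a₂ a₃ : V) (h₁ : G.Adj s a₁) (h₂ : G.Adj s a₂) (h₃ : G.Adj s a₃)
       (p₁ : G.Walk a₁ s') (p₂ : G.Walk a₂ s') (p₃ : G.Walk a₃ s'),
       G.neighborFinset s = {a₁, a₂, a₃} ∧
       SegP u v s p₁ ∧ SegP u v s p₂ ∧ SegP u v s p₃ ∧
       (∀ e ∈ (Walk.cons h₁ p₁).edges, e ∉ (Walk.cons h₂ p₂).edges) ∧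
       (∀ e ∈ (Walk.cons h₁ p₁).edges, e ∉ (Walk.cons h₃ p₃).edges) ∧
       (∀ e ∈ (Walk.cons h₂ p₂).edges, e ∉ (Walk.cons h₃ p₃).edges)) ∨
    (∃ (a₁ a₂ a₃ : V) (h₁ : G.Adj s a₁) (h₃ : G.Adj s a₃)
       (p₁ : G.Walk a₁ s) (p₃ : G.Walk a₃ s'),
       G.neighborFinset s = {a₁, a₂, a₃} ∧
       SegP u v s p₁ ∧ SegP u v s p₃ ∧ s(s, a₂) ∈ p₁.edges ∧
       (∀ e ∈ (Walk.cons h₁ p₁).edges, e ∉ (Walk.cons h₃ p₃).edges)) := by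
  have huvss : ∀ t : V, (t = u ∨ t = v) → t = s ∨ t = s' := by
    intro t ht
    rcases hs with rfl | rfl <;> rcases hs' with rfl | rfl <;> tauto
  have hcard : (G.neighborFinset s).card = 3 := by
    rw [card_neighborFinset_eq_degree, hdeg3]
  obtain ⟨a, b, c, hab, hac, hbc, hN⟩ := Finset.card_eq_three.mp hcard
  have hadjN : ∀ x, x ∈ ({a, b, c} : Finset V) → G.Adj s x := by
    intro x hx
    rw [← hN, mem_neighborFinset] at hx
    exact hx
  have hA : G.Adj s a := hadjN a (by simp)
  have hB : G.Adj s b := hadjN b (by simp)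
  have hC : G.Adj s c := hadjN c (by simp)
  have second_edge : ∀ {a₁ : V}, G.Adj s a₁ → ∀ (p₁ : G.Walk a₁ s), SegP u v s p₁ →
      ∃ y, y ∈ G.neighborFinset s ∧ y ≠ a₁ ∧ s(s, y) ∈ p₁.edges := by
    intro a₁ h₁ p₁ hp₁
    have hlen : 0 < p₁.length := by
      rcases Nat.eq_zero_or_pos p₁.length with h0 | h0
      · exact absurd (Walk.eq_of_length_eq_zero h0) h₁.ne'
      · exact h0
    obtain ⟨y, hy⟩ := exists_edge_at p₁ p₁.end_mem_support hlen
    refine ⟨y, ?_, ?_, hy⟩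
    · rw [mem_neighborFinset]
      exact p₁.adj_of_mem_edges hy
    · rintro rfl
      exact hp₁.2.2 hy
  have noCommon : ∀ {a₁ t₁ a₂ t₂ : V} (h₁ : G.Adj s a₁) (h₂ : G.Adj s a₂)
      (p₁ : G.Walk a₁ t₁) (p₂ : G.Walk a₂ t₂), (t₁ = u ∨ t₁ = v) → SegP u v s p₁ →
      SegP u v s p₂ → a₁ ≠ a₂ → t₁ ≠ s →
      ∀ e ∈ (Walk.cons h₁ p₁).edges, e ∉ (Walk.cons h₂ p₂).edges := by
    intro a₁ t₁ a₂ t₂ h₁ h₂ p₁ p₂ ht₁ hp₁ hp₂ hne12 hts e he₁ he₂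
    exact hts (seg_same_anchor hdeg hs ht₁ h₁ h₂ hne12 hp₁ hp₂ he₁ he₂).1
  have noCommonC : ∀ {a₁ a₂ t₂ y : V} (h₁ : G.Adj s a₁) (h₂ : G.Adj s a₂)
      (p₁ : G.Walk a₁ s) (p₂ : G.Walk a₂ t₂), SegP u v s p₁ → SegP u v s p₂ →
      a₁ ≠ a₂ → s(s, y) ∈ p₁.edges → y ≠ a₂ →
      ∀ e ∈ (Walk.cons h₁ p₁).edges, e ∉ (Walk.cons h₂ p₂).edges := by
    intro a₁ a₂ t₂ y h₁ h₂ p₁ p₂ hp₁ hp₂ hne12 hy hyne e he₁ he₂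
    have h2in := (seg_same_anchor hdeg hs hs h₁ h₂ hne12 hp₁ hp₂ he₁ he₂).2
    have hsd : s ∉ p₁.support.dropLast := by
      intro hd
      rcases hs with rfl | rfl
      · exact (hp₁.2.1 _ hd).1 rfl
      · exact (hp₁.2.1 _ hd).2 rfl
    exact hyne (unique_edge_at p₁ hsd y a₂ hy h2in)
  obtain ⟨ta, pa0, htauv, hnda0, hpa0⟩ := grow hdeg hs hA
  rcases huvss ta htauv with htas | htas
  · -- first segment is a cycle at s
    obtain ⟨pa, hpa⟩ : ∃ pa : G.Walk a s, SegP u v s pa :=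
      ⟨pa0.copy rfl htas, by simpa [SegP, Walk.support_copy, Walk.edges_copy] using hpa0⟩
    obtain ⟨y, hyN, hya, hy⟩ := second_edge hA pa hpa
    have hybc : y = b ∨ y = c := by
      rw [hN] at hyN
      simp only [Finset.mem_insert, Finset.mem_singleton] at hyN
      tauto
    have finishB : ∀ z y' : V, G.Adj s z → z ≠ a → z ≠ y' → y' ≠ a →
        s(s, y') ∈ pa.edges → G.neighborFinset s = {a, y', z} →
        (∃ (a₁ a₂ a₃ : V) (h₁ : G.Adj s a₁) (h₃ : G.Adj s a₃)
          (p₁ : G.Walk a₁ s) (p₃ : G.Walk a₃ s'),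
          G.neighborFinset s = {a₁, a₂, a₃} ∧
          SegP u v s p₁ ∧ SegP u v s p₃ ∧ s(s, a₂) ∈ p₁.edges ∧
          (∀ e ∈ (Walk.cons h₁ p₁).edges, e ∉ (Walk.cons h₃ p₃).edges)) := by
      intro z y' hZ hza hzy hy'a hy' hN'
      obtain ⟨tz, pz0, htzuv, hndz0, hpz0⟩ := grow hdeg hs hZ
      rcases huvss tz htzuv with htzs | htzs
      · obtain ⟨pz, hpz⟩ : ∃ pz : G.Walk z s, SegP u v s pz :=
          ⟨pz0.copy rfl htzs, by simpa [SegP, Walk.support_copy, Walk.edges_copy] using hpz0⟩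
        exfalso
        obtain ⟨w, hwN, hwz, hw⟩ := second_edge hZ pz hpz
        have hwc : w = a ∨ w = y' := by
          rw [hN'] at hwN
          simp only [Finset.mem_insert, Finset.mem_singleton] at hwN
          tauto
        have hmm1 : s(s, w) ∈ (Walk.cons hZ pz).edges := by
          rw [edges_cons]; exact List.mem_cons_of_mem _ hw
        have hmm2 : s(s, w) ∈ (Walk.cons hA pa).edges := by
          rcases hwc with rfl | rfl
          · rw [edges_cons]; exact List.mem_cons_self
          · rw [edges_cons]; exact List.mem_cons_of_mem _ hy'
        exact noCommonC hA hZ pa pz hpa hpz (fun hh => hza hh.symm) hy'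
          (fun hh => hzy hh.symm) s(s, w) hmm2 hmm1
      · obtain ⟨pz, hpz⟩ : ∃ pz : G.Walk z s', SegP u v s pz :=
          ⟨pz0.copy rfl htzs, by simpa [SegP, Walk.support_copy, Walk.edges_copy] using hpz0⟩
        exact ⟨a, y', z, hA, hZ, pa, pz, hN', hpa, hpz, hy',
          noCommonC hA hZ pa pz hpa hpz (fun hh => hza hh.symm) hy' (fun hh => hzy hh.symm)⟩
    right
    rcases hybc with rfl | rfl
    · exact finishB c y hC (fun hh => hac hh.symm) (fun hh => hbc hh.symm)
        (fun hh => hab hh.symm) hy hN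
    · exact finishB b y hB (fun hh => hab hh.symm) hbc
        (fun hh => hac hh.symm) hy (by rw [hN, Finset.pair_comm b y])
  · -- first segment is a path to s'
    obtain ⟨pa, hpa⟩ : ∃ pa : G.Walk a s', SegP u v s pa :=
      ⟨pa0.copy rfl htas, by simpa [SegP, Walk.support_copy, Walk.edges_copy] using hpa0⟩
    obtain ⟨tb, pb0, htbuv, hndb0, hpb0⟩ := grow hdeg hs hB
    rcases huvss tb htbuv with htbs | htbs
    · -- second segment is a cycle at s
      obtain ⟨pb, hpb⟩ : ∃ pb : G.Walk b s, SegP u v s pb :=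
        ⟨pb0.copy rfl htbs, by simpa [SegP, Walk.support_copy, Walk.edges_copy] using hpb0⟩
      obtain ⟨y, hyN, hyb, hy⟩ := second_edge hB pb hpb
      have hyac : y = a ∨ y = c := by
        rw [hN] at hyN
        simp only [Finset.mem_insert, Finset.mem_singleton] at hyN
        tauto
      rcases hyac with rfl | rfl
      · exfalso
        have hmm1 : s(s, y) ∈ (Walk.cons hA pa).edges := by
          rw [edges_cons]; exact List.mem_cons_self
        have hmm2 : s(s, y) ∈ (Walk.cons hB pb).edges := by
          rw [edges_cons]; exact List.mem_cons_of_mem _ hy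
        exact noCommon hA hB pa pb hs' hpa hpb hab hne.symm s(s, y) hmm1 hmm2
      · right
        refine ⟨b, y, a, hB, hA, pb, pa, ?_, hpb, hpa, hy,
          noCommonC hB hA pb pa hpb hpa (fun hh => hab hh.symm) hy (fun hh => hac hh.symm)⟩
        rw [hN]
        ext x
        simp only [Finset.mem_insert, Finset.mem_singleton]
        tauto
    · obtain ⟨pb, hpb⟩ : ∃ pb : G.Walk b s', SegP u v s pb :=
        ⟨pb0.copy rfl htbs, by simpa [SegP, Walk.support_copy, Walk.edges_copy] using hpb0⟩
      obtain ⟨tc, pc0, htcuv, hndc0, hpc0⟩ := grow hdeg hs hC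
      rcases huvss tc htcuv with htcs | htcs
      · obtain ⟨pc, hpc⟩ : ∃ pc : G.Walk c s, SegP u v s pc :=
          ⟨pc0.copy rfl htcs, by simpa [SegP, Walk.support_copy, Walk.edges_copy] using hpc0⟩
        exfalso
        obtain ⟨y, hyN, hyc, hy⟩ := second_edge hC pc hpc
        have hyab : y = a ∨ y = b := by
          rw [hN] at hyN
          simp only [Finset.mem_insert, Finset.mem_singleton] at hyN
          tauto
        have hmm2 : s(s, y) ∈ (Walk.cons hC pc).edges := by
          rw [edges_cons]; exact List.mem_cons_of_mem _ hy
        rcases hyab with rfl | rfl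
        · have hmm1 : s(s, y) ∈ (Walk.cons hA pa).edges := by
            rw [edges_cons]; exact List.mem_cons_self
          exact noCommon hA hC pa pc hs' hpa hpc hac hne.symm s(s, y) hmm1 hmm2
        · have hmm1 : s(s, y) ∈ (Walk.cons hB pb).edges := by
            rw [edges_cons]; exact List.mem_cons_self
          exact noCommon hB hC pb pc hs' hpb hpc hbc hne.symm s(s, y) hmm1 hmm2
      · obtain ⟨pc, hpc⟩ : ∃ pc : G.Walk c s', SegP u v s pc :=
          ⟨pc0.copy rfl htcs, by simpa [SegP, Walk.support_copy, Walk.edges_copy] using hpc0⟩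
        left
        exact ⟨a, b, c, hA, hB, hC, pa, pb, pc, hN, hpa, hpb, hpc,
          noCommon hA hB pa pb hs' hpa hpb hab hne.symm,
          noCommon hA hC pa pc hs' hpa hpc hac hne.symm,
          noCommon hB hC pb pc hs' hpb hpc hbc hne.symm⟩

lemma SegP.cons_isPath {s a t : V} {h : G.Adj s a} {p : G.Walk a t}
    (hp : SegP u v s p) (hs : s = u ∨ s = v) (hts : t ≠ s) :
    (Walk.cons h p).IsPath := by
  apply Walk.IsPath.mk'
  rw [support_cons, List.nodup_cons]
  refine ⟨?_, hp.1⟩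
  intro hmem
  exact hts (hp.mem_uv_eq_end hmem hs).symm

lemma SegP.cons_isCycle {s a : V} {h : G.Adj s a} {p : G.Walk a s} (hp : SegP u v s p) :
    (Walk.cons h p).IsCycle := by
  rw [Walk.cons_isCycle_iff]
  exact ⟨Walk.IsPath.mk' hp.1, hp.2.2⟩

lemma SegP.uv_not_mem_cons {s a t x : V} {h : G.Adj s a} {p : G.Walk a t}
    (hp : SegP u v s p) (hxuv : x = u ∨ x = v) (hxs : x ≠ s) (hxt : x ≠ t) :
    x ∉ (Walk.cons h p).support := by
  rw [support_cons, List.mem_cons]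
  rintro (rfl | hmem)
  · exact hxs rfl
  · exact hxt (hp.mem_uv_eq_end hmem hxuv)

lemma common_vertex_edge (hdeg : ∀ w : V, w ≠ u → w ≠ v → G.degree w = 2)
    {s₁ a₁ t₁ s₂ a₂ t₂ x : V}
    (hs₂ : s₂ = u ∨ s₂ = v) (ht₂ : t₂ = u ∨ t₂ = v)
    (h₁ : G.Adj s₁ a₁) (h₂ : G.Adj s₂ a₂)
    {p₁ : G.Walk a₁ t₁} {p₂ : G.Walk a₂ t₂} (hp₁ : SegP u v s₁ p₁) (hp₂ : SegP u v s₂ p₂)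
    (hx₁ : x ∈ (Walk.cons h₁ p₁).support) (hx₂ : x ∈ (Walk.cons h₂ p₂).support)
    (hxu : x ≠ u) (hxv : x ≠ v) :
    ∃ e, e ∈ (Walk.cons h₁ p₁).edges ∧ e ∈ (Walk.cons h₂ p₂).edges := by
  obtain ⟨y, hy⟩ := exists_edge_at _ hx₁ (by rw [Walk.length_cons]; omega)
  refine ⟨s(x, y), hy, ?_⟩
  have hadj : G.Adj x y := Walk.adj_of_mem_edges _ hy
  refine deg_two_edge_mem hdeg _ hp₂.cons_edges_nodup hx₂ ?_ ?_ hxu hxv hadj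
  · rcases hs₂ with rfl | rfl
    · exact hxu
    · exact hxv
  · rcases ht₂ with rfl | rfl
    · exact hxu
    · exact hxv

lemma coverage (hconn : G.Connected) (S : Sym2 V → Prop)
    (hu' : ∀ y, G.Adj u y → S s(u, y)) (hv' : ∀ y, G.Adj v y → S s(v, y))
    (hmid : ∀ x y, S s(x, y) → y ≠ u → y ≠ v → ∀ z, G.Adj y z → S s(y, z)) :
    ∀ e ∈ G.edgeSet, S e := by
  have hstep : ∀ x, (∀ y, G.Adj x y → S s(x, y)) → ∀ y, G.Adj x y →
      (∀ z, G.Adj y z → S s(y, z)) := by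
    intro x hx y hxy z hyz
    by_cases hyu : y = u
    · subst hyu; exact hu' z hyz
    by_cases hyv : y = v
    · subst hyv; exact hv' z hyz
    exact hmid x y (hx y hxy) hyu hyv z hyz
  have hreach : ∀ {x t : V} (_ : G.Walk x t), (∀ y, G.Adj x y → S s(x, y)) →
      ∀ y, G.Adj t y → S s(t, y) := by
    intro x t w
    induction w with
    | nil => exact fun h => h
    | @cons x b t h q ih => intro hx; exact ih (hstep x hx b h)
  intro e he
  induction e with
  | _ x y =>
    rw [SimpleGraph.mem_edgeSet] at he
    obtain ⟨w⟩ := hconn.preconnected u x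
    exact hreach w hu' y he
end StmtTwoAux
open SimpleGraph Walk StmtTwoAux in
/-- A finite connected simple graph with exactly two vertices `u ≠ v` of degree 3
and all other vertices of degree 2 is either a theta graph (three internally
vertex-disjoint, pairwise edge-disjoint `u`–`v` paths covering all edges) or a
dumbbell graph (two vertex-disjoint cycles through `u` and `v` joined by a path
meeting them only in its endpoints, covering all edges). -/
theorem stmt_2 {V : Type*} [Fintype V] [DecidableEq V]
    (G : SimpleGraph V) [DecidableRel G.Adj]
    (hconn : G.Connected) (u v : V) (huv : u ≠ v)
    (hu : G.degree u = 3) (hv : G.degree v = 3)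
    (hother : ∀ w : V, w ≠ u → w ≠ v → G.degree w = 2) :
    (∃ p₁ p₂ p₃ : G.Walk u v, p₁.IsPath ∧ p₂.IsPath ∧ p₃.IsPath ∧
      (∀ x : V, x ∈ p₁.support → x ∈ p₂.support → x = u ∨ x = v) ∧
      (∀ x : V, x ∈ p₁.support → x ∈ p₃.support → x = u ∨ x = v) ∧
      (∀ x : V, x ∈ p₂.support → x ∈ p₃.support → x = u ∨ x = v) ∧
      (∀ e : Sym2 V, e ∈ p₁.edges → e ∉ p₂.edges) ∧
      (∀ e : Sym2 V, e ∈ p₁.edges → e ∉ p₃.edges) ∧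
      (∀ e : Sym2 V, e ∈ p₂.edges → e ∉ p₃.edges) ∧
      (∀ e ∈ G.edgeSet, e ∈ p₁.edges ∨ e ∈ p₂.edges ∨ e ∈ p₃.edges)) ∨
    (∃ (c₁ : G.Walk u u) (c₂ : G.Walk v v) (p : G.Walk u v),
      c₁.IsCycle ∧ c₂.IsCycle ∧ p.IsPath ∧
      (∀ x : V, x ∈ c₁.support → x ∉ c₂.support) ∧
      (∀ x : V, x ∈ p.support → x ∈ c₁.support → x = u) ∧
      (∀ x : V, x ∈ p.support → x ∈ c₂.support → x = v) ∧
      (∀ e ∈ G.edgeSet, e ∈ c₁.edges ∨ e ∈ c₂.edges ∨ e ∈ p.edges)) := by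
  classical
  open StmtTwoAux in
  rcases StmtTwoAux.fork hother (Or.inl rfl) (Or.inr rfl) huv hu with
    ⟨a₁, a₂, a₃, h₁, h₂, h₃, p₁, p₂, p₃, hN, hp1, hp2, hp3, d12, d13, d23⟩ |
    ⟨a₁, a₂, a₃, h₁, h₃, p₁, p₃, hN, hp1, hp3, h2in, dCP⟩
  · -- theta graph
    left
    have hmemN : ∀ y, G.Adj u y → y = a₁ ∨ y = a₂ ∨ y = a₃ := by
      intro y hy
      have : y ∈ ({a₁, a₂, a₃} : Finset V) := by
        rw [← hN, mem_neighborFinset]; exact hy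
      simpa using this
    -- an edge at v in each path
    obtain ⟨y₁, hy₁⟩ := exists_edge_at (x := v) (Walk.cons h₁ p₁)
      ((Walk.cons h₁ p₁).end_mem_support) (by rw [Walk.length_cons]; omega)
    obtain ⟨y₂, hy₂⟩ := exists_edge_at (x := v) (Walk.cons h₂ p₂)
      ((Walk.cons h₂ p₂).end_mem_support) (by rw [Walk.length_cons]; omega)
    obtain ⟨y₃, hy₃⟩ := exists_edge_at (x := v) (Walk.cons h₃ p₃)
      ((Walk.cons h₃ p₃).end_mem_support) (by rw [Walk.length_cons]; omega)
    have hvcov : ∀ y, G.Adj v y → y = y₁ ∨ y = y₂ ∨ y = y₃ := by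
      intro y hy
      have hne12 : y₁ ≠ y₂ := by rintro rfl; exact d12 _ hy₁ hy₂
      have hne13 : y₁ ≠ y₃ := by rintro rfl; exact d13 _ hy₁ hy₃
      have hne23 : y₂ ≠ y₃ := by rintro rfl; exact d23 _ hy₂ hy₃
      have hsub : ({y₁, y₂, y₃} : Finset V) ⊆ G.neighborFinset v := by
        intro z hz
        simp only [Finset.mem_insert, Finset.mem_singleton] at hz
        rw [mem_neighborFinset]
        rcases hz with rfl | rfl | rfl
        · exact (Walk.adj_of_mem_edges _ hy₁)
        · exact (Walk.adj_of_mem_edges _ hy₂)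
        · exact (Walk.adj_of_mem_edges _ hy₃)
      have heq : ({y₁, y₂, y₃} : Finset V) = G.neighborFinset v := by
        refine Finset.eq_of_subset_of_card_le hsub ?_
        rw [card_neighborFinset_eq_degree, hv,
          Finset.card_eq_three.mpr ⟨y₁, y₂, y₃, hne12, hne13, hne23, rfl⟩]
      have : y ∈ ({y₁, y₂, y₃} : Finset V) := by
        rw [heq, mem_neighborFinset]; exact hy
      simpa using this
    refine ⟨Walk.cons h₁ p₁, Walk.cons h₂ p₂, Walk.cons h₃ p₃,
      hp1.cons_isPath (Or.inl rfl) huv.symm,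
      hp2.cons_isPath (Or.inl rfl) huv.symm,
      hp3.cons_isPath (Or.inl rfl) huv.symm, ?_, ?_, ?_, d12, d13, d23, ?_⟩
    · intro x hx1 hx2
      by_contra hcon
      push_neg at hcon
      obtain ⟨e, he1, he2⟩ := common_vertex_edge hother (Or.inl rfl) (Or.inr rfl)
        h₁ h₂ hp1 hp2 hx1 hx2 hcon.1 hcon.2
      exact d12 e he1 he2
    · intro x hx1 hx2
      by_contra hcon
      push_neg at hcon
      obtain ⟨e, he1, he2⟩ := common_vertex_edge hother (Or.inl rfl) (Or.inr rfl)
        h₁ h₃ hp1 hp3 hx1 hx2 hcon.1 hcon.2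
      exact d13 e he1 he2
    · intro x hx1 hx2
      by_contra hcon
      push_neg at hcon
      obtain ⟨e, he1, he2⟩ := common_vertex_edge hother (Or.inl rfl) (Or.inr rfl)
        h₂ h₃ hp2 hp3 hx1 hx2 hcon.1 hcon.2
      exact d23 e he1 he2
    · refine coverage (u := u) (v := v) hconn _ ?_ ?_ ?_
      · intro y hy
        rcases hmemN y hy with rfl | rfl | rfl
        · exact Or.inl (by rw [edges_cons]; exact List.mem_cons_self)
        · exact Or.inr (Or.inl (by rw [edges_cons]; exact List.mem_cons_self))
        · exact Or.inr (Or.inr (by rw [edges_cons]; exact List.mem_cons_self))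
      · intro y hy
        rcases hvcov y hy with rfl | rfl | rfl
        · exact Or.inl hy₁
        · exact Or.inr (Or.inl hy₂)
        · exact Or.inr (Or.inr hy₃)
      · intro x y hS hyu hyv z hyz
        rcases hS with hS | hS | hS
        · refine Or.inl (deg_two_edge_mem hother _ hp1.cons_edges_nodup
            (Walk.snd_mem_support_of_mem_edges _ hS) hyu hyv hyu hyv hyz)
        · refine Or.inr (Or.inl (deg_two_edge_mem hother _ hp2.cons_edges_nodup
            (Walk.snd_mem_support_of_mem_edges _ hS) hyu hyv hyu hyv hyz))
        · refine Or.inr (Or.inr (deg_two_edge_mem hother _ hp3.cons_edges_nodup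
            (Walk.snd_mem_support_of_mem_edges _ hS) hyu hyv hyu hyv hyz))
  · -- dumbbell : cycle at u plus path to v; analyze the fork at v
    have hmemN : ∀ y, G.Adj u y → y = a₁ ∨ y = a₂ ∨ y = a₃ := by
      intro y hy
      have : y ∈ ({a₁, a₂, a₃} : Finset V) := by
        rw [← hN, mem_neighborFinset]; exact hy
      simpa using this
    rcases StmtTwoAux.fork hother (Or.inr rfl) (Or.inl rfl) huv.symm hv with
      ⟨b₁, b₂, b₃, k₁, k₂, k₃, q₁, q₂, q₃, hNv, hq1, hq2, hq3, e12, e13, e23⟩ |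
      ⟨b₁, b₂, b₃, k₁, k₃, q₁, q₃, hNv, hq1, hq3, k2in, dCPv⟩
    · -- impossible: three v-u paths while u has a cycle
      exfalso
      have hcyc_clash : ∀ {b t : V} (k : G.Adj v b) (q : G.Walk b t), SegP u v v q →
          ∀ e, e ∈ (Walk.cons h₁ p₁).edges → e ∈ (Walk.cons k q).edges → False := by
        intro b t k q hq e he1 he2
        exact cycle_seg_disjoint hother (Or.inl rfl) (Or.inr rfl) huv h₁ k hp1 hq he1 he2
      obtain ⟨z₁, hz₁⟩ := exists_edge_at (x := u) (Walk.cons k₁ q₁)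
        ((Walk.cons k₁ q₁).end_mem_support) (by rw [Walk.length_cons]; omega)
      obtain ⟨z₂, hz₂⟩ := exists_edge_at (x := u) (Walk.cons k₂ q₂)
        ((Walk.cons k₂ q₂).end_mem_support) (by rw [Walk.length_cons]; omega)
      have hc1mem : ∀ y, y = a₁ ∨ y = a₂ → s(u, y) ∈ (Walk.cons h₁ p₁).edges := by
        rintro y (rfl | rfl)
        · rw [edges_cons]; exact List.mem_cons_self
        · rw [edges_cons]; exact List.mem_cons_of_mem _ h2in
      rcases hmemN z₁ (Walk.adj_of_mem_edges _ hz₁) with rfl | rfl | rfl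
      · exact hcyc_clash k₁ q₁ hq1 _ (hc1mem _ (Or.inl rfl)) hz₁
      · exact hcyc_clash k₁ q₁ hq1 _ (hc1mem _ (Or.inr rfl)) hz₁
      · rcases hmemN z₂ (Walk.adj_of_mem_edges _ hz₂) with rfl | rfl | rfl
        · exact hcyc_clash k₂ q₂ hq2 _ (hc1mem _ (Or.inl rfl)) hz₂
        · exact hcyc_clash k₂ q₂ hq2 _ (hc1mem _ (Or.inr rfl)) hz₂
        · exact e12 _ hz₁ hz₂
    · -- dumbbell
      right
      have hmemNv : ∀ y, G.Adj v y → y = b₁ ∨ y = b₂ ∨ y = b₃ := by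
        intro y hy
        have : y ∈ ({b₁, b₂, b₃} : Finset V) := by
          rw [← hNv, mem_neighborFinset]; exact hy
        simpa using this
      -- disjointness between the u-cycle and any v-anchored segment
      have hc1v : ∀ {b t : V} (k : G.Adj v b) (q : G.Walk b t), SegP u v v q →
          ∀ e, e ∈ (Walk.cons h₁ p₁).edges → e ∈ (Walk.cons k q).edges → False := by
        intro b t k q hq e he1 he2
        exact cycle_seg_disjoint hother (Or.inl rfl) (Or.inr rfl) huv h₁ k hp1 hq he1 he2
      -- disjointness between the v-cycle and any u-anchored segment
      have hc2u : ∀ {b t : V} (k : G.Adj u b) (q : G.Walk b t), SegP u v u q →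
          ∀ e, e ∈ (Walk.cons k₁ q₁).edges → e ∈ (Walk.cons k q).edges → False := by
        intro b t k q hq e he1 he2
        exact cycle_seg_disjoint hother (Or.inr rfl) (Or.inl rfl) huv.symm k₁ k hq1 hq he1 he2
      -- the path's edge at v
      obtain ⟨z, hz⟩ := exists_edge_at (x := v) (Walk.cons h₃ p₃)
        ((Walk.cons h₃ p₃).end_mem_support) (by rw [Walk.length_cons]; omega)
      have hzb₃ : z = b₃ := by
        rcases hmemNv z (Walk.adj_of_mem_edges _ hz) with rfl | rfl | rfl
        · exact absurd (by rw [edges_cons]; exact List.mem_cons_self :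
            s(v, z) ∈ (Walk.cons k₁ q₁).edges) (fun hh => hc2u h₃ p₃ hp3 _ hh hz)
        · exact absurd (by rw [edges_cons]; exact List.mem_cons_of_mem _ k2in :
            s(v, z) ∈ (Walk.cons k₁ q₁).edges) (fun hh => hc2u h₃ p₃ hp3 _ hh hz)
        · rfl
      have huNot2 : u ∉ (Walk.cons k₁ q₁).support :=
        hq1.uv_not_mem_cons (Or.inl rfl) huv huv
      have hvNot1 : v ∉ (Walk.cons h₁ p₁).support :=
        hp1.uv_not_mem_cons (Or.inr rfl) huv.symm huv.symm
      refine ⟨Walk.cons h₁ p₁, Walk.cons k₁ q₁, Walk.cons h₃ p₃,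
        hp1.cons_isCycle, hq1.cons_isCycle,
        hp3.cons_isPath (Or.inl rfl) huv.symm, ?_, ?_, ?_, ?_⟩
      · intro x hx1 hx2
        by_cases hxu : x = u
        · subst hxu; exact huNot2 hx2
        by_cases hxv : x = v
        · subst hxv; exact hvNot1 hx1
        obtain ⟨e, he1, he2⟩ := common_vertex_edge hother (Or.inr rfl) (Or.inr rfl)
          h₁ k₁ hp1 hq1 hx1 hx2 hxu hxv
        exact hc1v k₁ q₁ hq1 e he1 he2
      · intro x hxP hx1
        by_contra hxu
        by_cases hxv : x = v
        · subst hxv; exact hvNot1 hx1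
        obtain ⟨e, he1, he2⟩ := common_vertex_edge hother (Or.inl rfl) (Or.inl rfl)
          h₃ h₁ hp3 hp1 hxP hx1 hxu hxv
        exact dCP e he2 he1
      · intro x hxP hx2
        by_contra hxv
        by_cases hxu : x = u
        · subst hxu; exact huNot2 hx2
        obtain ⟨e, he1, he2⟩ := common_vertex_edge hother (Or.inr rfl) (Or.inr rfl)
          h₃ k₁ hp3 hq1 hxP hx2 hxu hxv
        exact hc2u h₃ p₃ hp3 e he2 he1
      · refine coverage (u := u) (v := v) hconn _ ?_ ?_ ?_
        · intro y hy
          rcases hmemN y hy with rfl | rfl | rfl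
          · exact Or.inl (by rw [edges_cons]; exact List.mem_cons_self)
          · exact Or.inl (by rw [edges_cons]; exact List.mem_cons_of_mem _ h2in)
          · exact Or.inr (Or.inr (by rw [edges_cons]; exact List.mem_cons_self))
        · intro y hy
          rcases hmemNv y hy with rfl | rfl | rfl
          · exact Or.inr (Or.inl (by rw [edges_cons]; exact List.mem_cons_self))
          · exact Or.inr (Or.inl (by rw [edges_cons]; exact List.mem_cons_of_mem _ k2in))
          · exact Or.inr (Or.inr (hzb₃ ▸ hz))
        · intro x y hS hyu hyv z' hyz
          rcases hS with hS | hS | hS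
          · refine Or.inl (deg_two_edge_mem hother _ hp1.cons_edges_nodup
              (Walk.snd_mem_support_of_mem_edges _ hS) hyu hyu hyu hyv hyz)
          · refine Or.inr (Or.inl (deg_two_edge_mem hother _ hq1.cons_edges_nodup
              (Walk.snd_mem_support_of_mem_edges _ hS) hyv hyv hyu hyv hyz))
          · refine Or.inr (Or.inr (deg_two_edge_mem hother _ hp3.cons_edges_nodup
              (Walk.snd_mem_support_of_mem_edges _ hS) hyu hyv hyu hyv hyz))
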